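/- For any positive integer r and all n ≥ 1, r! · C(n+r, r+1) = Σ_{j=1}^{r} [r choose j]_s · S_j(n), where [r choose j]_s denotes the unsigned Stirling numbers of the first kind and S_j(n) = Σ_{k=1}^n k^j. -/
import Mathlib


/-- Unsigned Stirling numbers of the first kind:
`stirling1 n k` counts permutations of `n` elements with `k` cycles. -/
def stirling1 : ℕ → ℕ → ℕ
  | 0, 0 => 1
  | 0, _ + 1 => 0
  | _ + 1, 0 => 0
  | n + 1, k + 1 => n * stirling1 n (k + 1) + stirling1 n k

lemma stirling1_eq_zero : ∀ n k : ℕ, n < k → stirling1 n k = 0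
  | 0, _ + 1, _ => rfl
  | n + 1, k + 1, h => by
    have h' : n < k := Nat.lt_of_succ_lt_succ h
    simp [stirling1, stirling1_eq_zero n (k+1) (h'.trans (Nat.lt_succ_self k)),
      stirling1_eq_zero n k h']

lemma mul_stirling1_zero (r : ℕ) : r * stirling1 r 0 = 0 := by
  cases r with
  | zero => simp
  | succ n => simp [stirling1]

lemma sum_stirling1_pow (r k : ℕ) :
    ∑ j ∈ Finset.range (r + 1), stirling1 r j * k ^ j = k.ascFactorial r := by
  induction r with
  | zero => simp [stirling1]
  | succ r ih =>
    have h1 := Finset.sum_range_succ' (fun j => stirling1 r j * k ^ j) (r + 1)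
    have h2 := Finset.sum_range_succ (fun j => stirling1 r j * k ^ j) (r + 1)
    simp only [stirling1_eq_zero r (r + 1) (Nat.lt_succ_self r), Nat.zero_mul,
      Nat.add_zero, pow_zero, Nat.mul_one] at h1 h2
    have hA : (∑ j ∈ Finset.range (r + 1), stirling1 r (j + 1) * k ^ (j + 1))
        + stirling1 r 0 = k.ascFactorial r := by omega
    rw [Finset.sum_range_succ' (fun j => stirling1 (r + 1) j * k ^ j) (r + 1)]
    have h0 : stirling1 (r + 1) 0 = 0 := rfl
    simp only [h0, Nat.zero_mul, Nat.add_zero, pow_zero, Nat.mul_zero]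
    have key : ∀ j, stirling1 (r + 1) (j + 1) * k ^ (j + 1)
        = r * (stirling1 r (j + 1) * k ^ (j + 1)) + k * (stirling1 r j * k ^ j) := by
      intro j
      show (r * stirling1 r (j + 1) + stirling1 r j) * k ^ (j + 1) = _
      ring
    simp only [key, Finset.sum_add_distrib, ← Finset.mul_sum, ih,
      Nat.ascFactorial_succ]
    have h3 : r * (∑ j ∈ Finset.range (r + 1), stirling1 r (j + 1) * k ^ (j + 1))
        = r * k.ascFactorial r := by
      rw [← hA, Nat.mul_add, mul_stirling1_zero]; omega
    rw [h3]; ring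

lemma sum_ascFactorial (r n : ℕ) :
    ∑ k ∈ Finset.Icc 1 n, k.ascFactorial r = r.factorial * (n + r).choose (r + 1) := by
  induction n with
  | zero => simp [Nat.choose_eq_zero_of_lt (Nat.lt_succ_self r)]
  | succ n ih =>
    rw [show n + 1 = n + 1 from rfl, Finset.sum_Icc_succ_top (by omega), ih,
      Nat.ascFactorial_eq_factorial_mul_choose]
    rw [show n + 1 + r = (n + r) + 1 by ring, Nat.choose_succ_succ' (n + r) r]
    ring

theorem stmt_19 (r n : ℕ) (hr : 1 ≤ r) (hn : 1 ≤ n) :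
    (r.factorial : ℚ) * ((n + r).choose (r + 1) : ℚ)
      = ∑ j ∈ Finset.Icc 1 r, (stirling1 r j : ℚ) * ∑ k ∈ Finset.Icc 1 n, (k : ℚ) ^ j := by
  have key : ∑ j ∈ Finset.Icc 1 r, stirling1 r j * ∑ k ∈ Finset.Icc 1 n, k ^ j
      = r.factorial * (n + r).choose (r + 1) := by
    rw [← sum_ascFactorial r n]
    simp only [Finset.mul_sum]
    rw [Finset.sum_comm]
    refine Finset.sum_congr rfl fun k _ => ?_
    rw [← sum_stirling1_pow r k]
    have h0 : stirling1 r 0 = 0 := by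
      cases r with
      | zero => omega
      | succ m => rfl
    have hins : Finset.range (r + 1) = insert 0 (Finset.Icc 1 r) := by
      ext x; simp [Nat.lt_succ_iff]; omega
    rw [hins, Finset.sum_insert (by simp), h0]
    simp
  exact_mod_cast key.symm
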